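/- For all integers l ≥ 1 and m ≥ 2: (i) the dehomogenization of G_{l,m} = x·(y·x^l + z^{l+1})^m − z^{(l+1)·m+1} at p = [0:1:0], namely x·(x^l + z^{l+1})^m − z^{(l+1)·m+1} ∈ ℂ[x,z], has multiplicity l·m + 1 at the origin; (ii) the dehomogenization at q = [1:0:0], namely (y + z^{l+1})^m − z^{(l+1)·m+1} ∈ ℂ[y,z], has multiplicity m at the origin. -/

import Mathlib

open MvPolynomial

private lemma hcomp_term (n a b c : ℕ) :
    homogeneousComponent n ((X 0 : MvPolynomial (Fin 2) ℂ) ^ a * X 1 ^ b * (c : MvPolynomial (Fin 2) ℂ)) =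
      if n = a + b then (X 0 : MvPolynomial (Fin 2) ℂ) ^ a * X 1 ^ b * (c : MvPolynomial (Fin 2) ℂ) else 0 := by
  apply homogeneousComponent_of_mem
  rw [mem_homogeneousSubmodule]
  have : ((c : ℕ) : MvPolynomial (Fin 2) ℂ) = C ((c : ℕ) : ℂ) := by
    simp [C_eq_coe_nat]
  rw [this]
  simpa using ((isHomogeneous_X_pow (R := ℂ) (0 : Fin 2) a).mul
    (isHomogeneous_X_pow (R := ℂ) (1 : Fin 2) b)).mul (isHomogeneous_C (Fin 2) ((c : ℕ) : ℂ))

private lemma hcomp_Xpow (n N : ℕ) :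
    homogeneousComponent n ((X 1 : MvPolynomial (Fin 2) ℂ) ^ N) =
      if n = N then (X 1 : MvPolynomial (Fin 2) ℂ) ^ N else 0 := by
  apply homogeneousComponent_of_mem
  rw [mem_homogeneousSubmodule]
  exact isHomogeneous_X_pow _ _


/-- `x·(x^l + z^{l+1})^m − z^{(l+1)·m+1}`, the dehomogenization of `G_{l,m}` at `[0:1:0]`,
as a polynomial in `ℂ[x,z]` with `x = X 0`, `z = X 1`. -/
noncomputable def Gdehom_p (l m : ℕ) : MvPolynomial (Fin 2) ℂ :=
  X 0 * (X 0 ^ l + X 1 ^ (l + 1)) ^ m - X 1 ^ ((l + 1) * m + 1)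

/-- `(y + z^{l+1})^m − z^{(l+1)·m+1}`, the dehomogenization of `G_{l,m}` at `[1:0:0]`,
as a polynomial in `ℂ[y,z]` with `y = X 0`, `z = X 1`. -/
noncomputable def Gdehom_q (l m : ℕ) : MvPolynomial (Fin 2) ℂ :=
  (X 0 + X 1 ^ (l + 1)) ^ m - X 1 ^ ((l + 1) * m + 1)

theorem stmt_6 (l m : ℕ) (hl : 1 ≤ l) (hm : 2 ≤ m) :
    ((∀ n < l * m + 1, homogeneousComponent n (Gdehom_p l m) = 0) ∧
      homogeneousComponent (l * m + 1) (Gdehom_p l m) ≠ 0) ∧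
    ((∀ n < m, homogeneousComponent n (Gdehom_q l m) = 0) ∧
      homogeneousComponent m (Gdehom_q l m) ≠ 0) := by
  -- expansions
  have hp : Gdehom_p l m =
      (∑ k ∈ Finset.range (m + 1),
        (X 0 : MvPolynomial (Fin 2) ℂ) ^ (l * k + 1) * X 1 ^ ((l + 1) * (m - k)) *
          ((m.choose k : ℕ) : MvPolynomial (Fin 2) ℂ)) - X 1 ^ ((l + 1) * m + 1) := by
    rw [Gdehom_p, add_pow, Finset.mul_sum]
    congr 1
    refine Finset.sum_congr rfl fun k _ => ?_
    ring
  have hq : Gdehom_q l m =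
      (∑ k ∈ Finset.range (m + 1),
        (X 0 : MvPolynomial (Fin 2) ℂ) ^ k * X 1 ^ ((l + 1) * (m - k)) *
          ((m.choose k : ℕ) : MvPolynomial (Fin 2) ℂ)) - X 1 ^ ((l + 1) * m + 1) := by
    rw [Gdehom_q, add_pow]
    rw [sub_left_inj]
    refine Finset.sum_congr rfl fun k _ => ?_
    ring
  -- degree formulas
  have degp : ∀ k ≤ m, l * k + 1 + (l + 1) * (m - k) = l * m + 1 + (m - k) := by
    intro k hk
    obtain ⟨j, rfl⟩ := Nat.exists_eq_add_of_le hk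
    rw [Nat.add_sub_cancel_left]
    ring
  have degq : ∀ k ≤ m, k + (l + 1) * (m - k) = m + l * (m - k) := by
    intro k hk
    obtain ⟨j, rfl⟩ := Nat.exists_eq_add_of_le hk
    rw [Nat.add_sub_cancel_left]
    ring
  have hlm : (l + 1) * m = l * m + m := by ring
  have hX : ((X 0 : MvPolynomial (Fin 2) ℂ)) ≠ 0 := X_ne_zero 0
  constructor
  · constructor
    · intro n hn
      rw [hp, map_sub, map_sum]
      rw [Finset.sum_eq_zero, hcomp_Xpow, if_neg, sub_zero]
      · omega
      · intro k hk
        rw [Finset.mem_range] at hk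
        rw [hcomp_term, if_neg]
        rw [degp k (by omega)]
        omega
    · rw [hp, map_sub, map_sum]
      rw [Finset.sum_eq_single m]
      · rw [hcomp_term, if_pos, hcomp_Xpow, if_neg, sub_zero]
        · simp only [Nat.choose_self, Nat.cast_one, mul_one, Nat.sub_self, mul_zero,
            pow_zero]
          exact pow_ne_zero _ hX
        · omega
        · simp
      · intro k hk hkm
        rw [Finset.mem_range] at hk
        rw [hcomp_term, if_neg]
        rw [degp k (by omega)]
        omega
      · simp
  · constructor
    · intro n hn
      rw [hq, map_sub, map_sum]
      rw [Finset.sum_eq_zero, hcomp_Xpow, if_neg, sub_zero]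
      · omega
      · intro k hk
        rw [Finset.mem_range] at hk
        rw [hcomp_term, if_neg]
        rw [degq k (by omega)]
        omega
    · rw [hq, map_sub, map_sum]
      rw [Finset.sum_eq_single m]
      · rw [hcomp_term, if_pos, hcomp_Xpow, if_neg, sub_zero]
        · simp only [Nat.choose_self, Nat.cast_one, mul_one, Nat.sub_self, mul_zero,
            pow_zero]
          exact pow_ne_zero _ hX
        · omega
        · simp
      · intro k hk hkm
        rw [Finset.mem_range] at hk
        rw [hcomp_term, if_neg]
        rw [degq k (by omega)]
        have : 1 ≤ m - k := by omega
        nlinarith [Nat.mul_le_mul_left l this]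
      · simp
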